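/- For k ≥ 1 and |A| ≥ 4, the lattice RC(A^k) of right congruences on A^k is not modular. Specifically, for distinct a,b,c,d ∈ A, the five relations λ (identity), σ = λ ∪ {a^k, ba^{k-1}}², σ' = σ ∪ {ca^{k-1}, da^{k-1}}², τ = λ ∪ {a^k, da^{k-1}}² ∪ {ba^{k-1}, ca^{k-1}}², ρ = λ ∪ {a^k, ba^{k-1}, ca^{k-1}, da^{k-1}}² are right congruences forming a pentagon sublattice (λ ⊂ σ ⊂ σ' ⊂ ρ, λ ⊂ τ ⊂ ρ, σ' ∩ τ = λ, σ ∨ τ = ρ). -/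
import Mathlib


/-- Words of length `k` over `A`. -/
abbrev Word (A : Type*) (k : ℕ) := {w : List A // w.length = k}

/-- The shift action of a letter: `u.a` is the suffix of length `k` of `u a`. -/
def act {A : Type*} (k : ℕ) (a : A) (u : Word A k) : Word A k :=
  ⟨(u.val ++ [a]).drop ((u.val ++ [a]).length - k), by
    have h := u.2
    simp only [List.length_drop, List.length_append, List.length_cons,
      List.length_nil, h]
    omega⟩

/-- A right congruence on `A^k`. -/
def IsRC {A : Type*} (k : ℕ) (r : Word A k → Word A k → Prop) : Prop :=
  Equivalence r ∧ ∀ u v : Word A k, r u v → ∀ a : A, r (act k a u) (act k a v)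

/-- Containment of relations. -/
def Rle {A : Type*} {k : ℕ} (r r' : Word A k → Word A k → Prop) : Prop :=
  ∀ u v : Word A k, r u v → r' u v

/-- The join of two right congruences in `RC(A^k)`. -/
def RCjoin {A : Type*} (k : ℕ) (σ τ : Word A k → Word A k → Prop)
    (u v : Word A k) : Prop :=
  ∀ μ : Word A k → Word A k → Prop, IsRC k μ → Rle σ μ → Rle τ μ → μ u v

lemma act_val {A : Type*} {k : ℕ} (hk : 1 ≤ k) (e : A) (u : Word A k) :
    (act k e u).val = u.val.tail ++ [e] := by
  obtain ⟨l, hl⟩ := u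
  cases l with
  | nil => simp at hl; omega
  | cons x t =>
    show ((x :: t ++ [e]).drop ((x :: t ++ [e]).length - k)) = t ++ [e]
    have h1 : (x :: t ++ [e]).length - k = 1 := by
      simp only [List.length_cons, List.length_append, List.length_nil] at hl ⊢
      omega
    rw [h1]
    simp

set_option maxHeartbeats 2000000 in
theorem rc_aux {A : Type*} (k : ℕ) (hk : 1 ≤ k) (a b c d : A)
    (hab : a ≠ b) (hac : a ≠ c) (had : a ≠ d)
    (hbc : b ≠ c) (hbd : b ≠ d) (hcd : c ≠ d)
    (lam σ σ' τ ρ : Word A k → Word A k → Prop)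
    (hlam : lam = fun u v => u = v)
    (hσ : σ = fun u v => u = v ∨
      (u.val ∈ ({List.replicate k a, b :: List.replicate (k-1) a} : Set (List A)) ∧
       v.val ∈ ({List.replicate k a, b :: List.replicate (k-1) a} : Set (List A))))
    (hσ' : σ' = fun u v => σ u v ∨
      (u.val ∈ ({c :: List.replicate (k-1) a, d :: List.replicate (k-1) a} : Set (List A)) ∧
       v.val ∈ ({c :: List.replicate (k-1) a, d :: List.replicate (k-1) a} : Set (List A))))
    (hτ : τ = fun u v => u = v ∨
      (u.val ∈ ({List.replicate k a, d :: List.replicate (k-1) a} : Set (List A)) ∧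
       v.val ∈ ({List.replicate k a, d :: List.replicate (k-1) a} : Set (List A))) ∨
      (u.val ∈ ({b :: List.replicate (k-1) a, c :: List.replicate (k-1) a} : Set (List A)) ∧
       v.val ∈ ({b :: List.replicate (k-1) a, c :: List.replicate (k-1) a} : Set (List A))))
    (hρ : ρ = fun u v => u = v ∨
      (u.val ∈ ({List.replicate k a, b :: List.replicate (k-1) a, c :: List.replicate (k-1) a,
          d :: List.replicate (k-1) a} : Set (List A)) ∧
       v.val ∈ ({List.replicate k a, b :: List.replicate (k-1) a, c :: List.replicate (k-1) a,
          d :: List.replicate (k-1) a} : Set (List A)))) :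
    IsRC k lam ∧ IsRC k σ ∧ IsRC k σ' ∧ IsRC k τ ∧ IsRC k ρ ∧
    (Rle lam σ ∧ ¬ Rle σ lam) ∧ (Rle σ σ' ∧ ¬ Rle σ' σ) ∧ (Rle σ' ρ ∧ ¬ Rle ρ σ') ∧
    (Rle lam τ ∧ ¬ Rle τ lam) ∧ (Rle τ ρ ∧ ¬ Rle ρ τ) ∧
    (∀ u v : Word A k, (σ' u v ∧ τ u v) ↔ lam u v) ∧
    (∀ u v : Word A k, RCjoin k σ τ u v ↔ ρ u v) := by
  subst hσ' hσ hτ hρ hlam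
  have hrep : List.replicate k a = a :: List.replicate (k-1) a := by
    conv_lhs => rw [show k = (k-1)+1 by omega, List.replicate_succ]
  -- distinctness of the four words
  have n1 : List.replicate k a ≠ b :: List.replicate (k-1) a := by rw [hrep]; simp [hab]
  have n2 : List.replicate k a ≠ c :: List.replicate (k-1) a := by rw [hrep]; simp [hac]
  have n3 : List.replicate k a ≠ d :: List.replicate (k-1) a := by rw [hrep]; simp [had]
  have n4 : b :: List.replicate (k-1) a ≠ c :: List.replicate (k-1) a := by simp [hbc]
  have n5 : b :: List.replicate (k-1) a ≠ d :: List.replicate (k-1) a := by simp [hbd]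
  have n6 : c :: List.replicate (k-1) a ≠ d :: List.replicate (k-1) a := by simp [hcd]
  -- tails
  have t0 : (List.replicate k a).tail = List.replicate (k-1) a := by rw [hrep]; rfl
  have tail4 : ∀ u : Word A k,
      (u.val = List.replicate k a ∨ u.val = b :: List.replicate (k-1) a ∨
       u.val = c :: List.replicate (k-1) a ∨ u.val = d :: List.replicate (k-1) a) →
      u.val.tail = List.replicate (k-1) a := by
    rintro u (h|h|h|h) <;> rw [h]
    · exact t0
    · rfl
    · rfl
    · rfl
  have hActEq : ∀ (u v : Word A k), u.val.tail = v.val.tail → ∀ e : A,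
      act k e u = act k e v := by
    intro u v h e
    exact Subtype.ext (by rw [act_val hk, act_val hk, h])

  -- pin lemmas for the meet
  have pin1 : ∀ l : List A, (l = List.replicate k a ∨ l = b :: List.replicate (k-1) a) → (l = List.replicate k a ∨ l = d :: List.replicate (k-1) a) → l = List.replicate k a := by
    rintro l (rfl|rfl) (h|h)
    · rfl
    · rfl
    · exact h
    · exact absurd h n5
  have pin2 : ∀ l : List A, (l = List.replicate k a ∨ l = b :: List.replicate (k-1) a) → (l = b :: List.replicate (k-1) a ∨ l = c :: List.replicate (k-1) a) → l = b :: List.replicate (k-1) a := by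
    rintro l (rfl|rfl) (h|h)
    · exact h
    · exact absurd h n2
    · rfl
    · rfl
  have pin3 : ∀ l : List A, (l = c :: List.replicate (k-1) a ∨ l = d :: List.replicate (k-1) a) → (l = List.replicate k a ∨ l = d :: List.replicate (k-1) a) → l = d :: List.replicate (k-1) a := by
    rintro l (rfl|rfl) (h|h)
    · exact absurd h.symm n2
    · exact h
    · exact absurd h.symm n3
    · rfl
  have pin4 : ∀ l : List A, (l = c :: List.replicate (k-1) a ∨ l = d :: List.replicate (k-1) a) → (l = b :: List.replicate (k-1) a ∨ l = c :: List.replicate (k-1) a) → l = c :: List.replicate (k-1) a := by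
    rintro l (rfl|rfl) (h|h)
    · exact absurd h.symm n4
    · rfl
    · exact absurd h.symm n5
    · exact h
  have disjs : ∀ l : List A, (l = List.replicate k a ∨ l = b :: List.replicate (k-1) a) → (l = c :: List.replicate (k-1) a ∨ l = d :: List.replicate (k-1) a) → False := by
    rintro l (rfl|rfl) (h|h)
    · exact n2 h
    · exact n3 h
    · exact n4 h
    · exact n5 h
  have disjt : ∀ l : List A, (l = List.replicate k a ∨ l = d :: List.replicate (k-1) a) → (l = b :: List.replicate (k-1) a ∨ l = c :: List.replicate (k-1) a) → False := by
    rintro l (rfl|rfl) (h|h)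
    · exact n1 h
    · exact n2 h
    · exact n5 h.symm
    · exact n6 h.symm
  have up1 : ∀ l : List A, l ∈ ({List.replicate k a, b :: List.replicate (k-1) a} : Set (List A)) →
      l ∈ ({List.replicate k a, b :: List.replicate (k-1) a, c :: List.replicate (k-1) a, d :: List.replicate (k-1) a} : Set (List A)) := by
    intro l h; simp only [Set.mem_insert_iff, Set.mem_singleton_iff] at h ⊢; tauto
  have up2 : ∀ l : List A, l ∈ ({c :: List.replicate (k-1) a, d :: List.replicate (k-1) a} : Set (List A)) →
      l ∈ ({List.replicate k a, b :: List.replicate (k-1) a, c :: List.replicate (k-1) a, d :: List.replicate (k-1) a} : Set (List A)) := by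
    intro l h; simp only [Set.mem_insert_iff, Set.mem_singleton_iff] at h ⊢; tauto
  have up3 : ∀ l : List A, l ∈ ({List.replicate k a, d :: List.replicate (k-1) a} : Set (List A)) →
      l ∈ ({List.replicate k a, b :: List.replicate (k-1) a, c :: List.replicate (k-1) a, d :: List.replicate (k-1) a} : Set (List A)) := by
    intro l h; simp only [Set.mem_insert_iff, Set.mem_singleton_iff] at h ⊢; tauto
  have up4 : ∀ l : List A, l ∈ ({b :: List.replicate (k-1) a, c :: List.replicate (k-1) a} : Set (List A)) →
      l ∈ ({List.replicate k a, b :: List.replicate (k-1) a, c :: List.replicate (k-1) a, d :: List.replicate (k-1) a} : Set (List A)) := by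
    intro l h; simp only [Set.mem_insert_iff, Set.mem_singleton_iff] at h ⊢; tauto
  let wa : Word A k := ⟨List.replicate k a, by simp⟩
  let wb : Word A k := ⟨b :: List.replicate (k-1) a, by simp; omega⟩
  let wc : Word A k := ⟨c :: List.replicate (k-1) a, by simp; omega⟩
  let wd : Word A k := ⟨d :: List.replicate (k-1) a, by simp; omega⟩
  have mwa4 : wa.val ∈ ({List.replicate k a, b :: List.replicate (k-1) a, c :: List.replicate (k-1) a, d :: List.replicate (k-1) a} : Set (List A)) := Set.mem_insert _ _
  have mwb4 : wb.val ∈ ({List.replicate k a, b :: List.replicate (k-1) a, c :: List.replicate (k-1) a, d :: List.replicate (k-1) a} : Set (List A)) :=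
    Set.mem_insert_of_mem _ (Set.mem_insert _ _)
  have mwc4 : wc.val ∈ ({List.replicate k a, b :: List.replicate (k-1) a, c :: List.replicate (k-1) a, d :: List.replicate (k-1) a} : Set (List A)) :=
    Set.mem_insert_of_mem _ (Set.mem_insert_of_mem _ (Set.mem_insert _ _))
  -- the right congruence proofs
  have RClam : IsRC k (fun u v : Word A k => u = v) := by
    constructor
    · exact ⟨fun _ => rfl, fun h => h.symm, fun h1 h2 => h1.trans h2⟩
    · intro u v h e; rw [h]
  have RCσ : IsRC k (fun u v : Word A k => u = v ∨
      (u.val ∈ ({List.replicate k a, b :: List.replicate (k-1) a} : Set (List A)) ∧ v.val ∈ ({List.replicate k a, b :: List.replicate (k-1) a} : Set (List A)))) := by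
    constructor
    · constructor
      · intro u; exact Or.inl rfl
      · intro u v h
        rcases h with rfl|⟨h1,h2⟩
        · exact Or.inl rfl
        · exact Or.inr ⟨h2,h1⟩
      · intro u v w h h'
        rcases h with rfl|⟨h1,h2⟩
        · exact h'
        · rcases h' with rfl|⟨h3,h4⟩
          · exact Or.inr ⟨h1,h2⟩
          · exact Or.inr ⟨h1,h4⟩
    · intro u v h e
      rcases h with rfl|⟨h1,h2⟩
      · exact Or.inl rfl
      · refine Or.inl (hActEq u v ?_ e)
        simp only [Set.mem_insert_iff, Set.mem_singleton_iff] at h1 h2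
        rw [tail4 u (by tauto), tail4 v (by tauto)]
  have RCσ' : IsRC k (fun u v : Word A k => (u = v ∨
      (u.val ∈ ({List.replicate k a, b :: List.replicate (k-1) a} : Set (List A)) ∧ v.val ∈ ({List.replicate k a, b :: List.replicate (k-1) a} : Set (List A)))) ∨
      (u.val ∈ ({c :: List.replicate (k-1) a, d :: List.replicate (k-1) a} : Set (List A)) ∧ v.val ∈ ({c :: List.replicate (k-1) a, d :: List.replicate (k-1) a} : Set (List A)))) := by
    constructor
    · constructor
      · intro u; exact Or.inl (Or.inl rfl)
      · intro u v h
        rcases h with (rfl|⟨h1,h2⟩)|⟨h1,h2⟩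
        · exact Or.inl (Or.inl rfl)
        · exact Or.inl (Or.inr ⟨h2,h1⟩)
        · exact Or.inr ⟨h2,h1⟩
      · intro u v w h h'
        rcases h with (rfl|⟨h1,h2⟩)|⟨h1,h2⟩
        · exact h'
        · rcases h' with (rfl|⟨h3,h4⟩)|⟨h3,h4⟩
          · exact Or.inl (Or.inr ⟨h1,h2⟩)
          · exact Or.inl (Or.inr ⟨h1,h4⟩)
          · exfalso
            simp only [Set.mem_insert_iff, Set.mem_singleton_iff] at h2 h3
            exact disjs v.val h2 h3
        · rcases h' with (rfl|⟨h3,h4⟩)|⟨h3,h4⟩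
          · exact Or.inr ⟨h1,h2⟩
          · exfalso
            simp only [Set.mem_insert_iff, Set.mem_singleton_iff] at h2 h3
            exact disjs v.val h3 h2
          · exact Or.inr ⟨h1,h4⟩
    · intro u v h e
      rcases h with (rfl|⟨h1,h2⟩)|⟨h1,h2⟩
      · exact Or.inl (Or.inl rfl)
      · refine Or.inl (Or.inl (hActEq u v ?_ e))
        simp only [Set.mem_insert_iff, Set.mem_singleton_iff] at h1 h2
        rw [tail4 u (by tauto), tail4 v (by tauto)]
      · refine Or.inl (Or.inl (hActEq u v ?_ e))
        simp only [Set.mem_insert_iff, Set.mem_singleton_iff] at h1 h2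
        rw [tail4 u (by tauto), tail4 v (by tauto)]
  have RCτ : IsRC k (fun u v : Word A k => u = v ∨
      (u.val ∈ ({List.replicate k a, d :: List.replicate (k-1) a} : Set (List A)) ∧ v.val ∈ ({List.replicate k a, d :: List.replicate (k-1) a} : Set (List A))) ∨
      (u.val ∈ ({b :: List.replicate (k-1) a, c :: List.replicate (k-1) a} : Set (List A)) ∧ v.val ∈ ({b :: List.replicate (k-1) a, c :: List.replicate (k-1) a} : Set (List A)))) := by
    constructor
    · constructor
      · intro u; exact Or.inl rfl
      · intro u v h
        rcases h with rfl|⟨h1,h2⟩|⟨h1,h2⟩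
        · exact Or.inl rfl
        · exact Or.inr (Or.inl ⟨h2,h1⟩)
        · exact Or.inr (Or.inr ⟨h2,h1⟩)
      · intro u v w h h'
        rcases h with rfl|⟨h1,h2⟩|⟨h1,h2⟩
        · exact h'
        · rcases h' with rfl|⟨h3,h4⟩|⟨h3,h4⟩
          · exact Or.inr (Or.inl ⟨h1,h2⟩)
          · exact Or.inr (Or.inl ⟨h1,h4⟩)
          · exfalso
            simp only [Set.mem_insert_iff, Set.mem_singleton_iff] at h2 h3
            exact disjt v.val h2 h3
        · rcases h' with rfl|⟨h3,h4⟩|⟨h3,h4⟩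
          · exact Or.inr (Or.inr ⟨h1,h2⟩)
          · exfalso
            simp only [Set.mem_insert_iff, Set.mem_singleton_iff] at h2 h3
            exact disjt v.val h3 h2
          · exact Or.inr (Or.inr ⟨h1,h4⟩)
    · intro u v h e
      rcases h with rfl|⟨h1,h2⟩|⟨h1,h2⟩
      · exact Or.inl rfl
      · refine Or.inl (hActEq u v ?_ e)
        simp only [Set.mem_insert_iff, Set.mem_singleton_iff] at h1 h2
        rw [tail4 u (by tauto), tail4 v (by tauto)]
      · refine Or.inl (hActEq u v ?_ e)
        simp only [Set.mem_insert_iff, Set.mem_singleton_iff] at h1 h2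
        rw [tail4 u (by tauto), tail4 v (by tauto)]
  have RCρ : IsRC k (fun u v : Word A k => u = v ∨
      (u.val ∈ ({List.replicate k a, b :: List.replicate (k-1) a, c :: List.replicate (k-1) a, d :: List.replicate (k-1) a} : Set (List A)) ∧
       v.val ∈ ({List.replicate k a, b :: List.replicate (k-1) a, c :: List.replicate (k-1) a, d :: List.replicate (k-1) a} : Set (List A)))) := by
    constructor
    · constructor
      · intro u; exact Or.inl rfl
      · intro u v h
        rcases h with rfl|⟨h1,h2⟩
        · exact Or.inl rfl
        · exact Or.inr ⟨h2,h1⟩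
      · intro u v w h h'
        rcases h with rfl|⟨h1,h2⟩
        · exact h'
        · rcases h' with rfl|⟨h3,h4⟩
          · exact Or.inr ⟨h1,h2⟩
          · exact Or.inr ⟨h1,h4⟩
    · intro u v h e
      rcases h with rfl|⟨h1,h2⟩
      · exact Or.inl rfl
      · refine Or.inl (hActEq u v ?_ e)
        simp only [Set.mem_insert_iff, Set.mem_singleton_iff] at h1 h2
        rw [tail4 u h1, tail4 v h2]
  refine ⟨RClam, RCσ, RCσ', RCτ, RCρ, ⟨?_, ?_⟩, ⟨?_, ?_⟩, ⟨?_, ?_⟩, ⟨?_, ?_⟩, ⟨?_, ?_⟩, ?_, ?_⟩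
  · intro u v h; exact Or.inl h
  · intro h
    exact n1 (congrArg Subtype.val
      (h wa wb (Or.inr ⟨Set.mem_insert _ _, Set.mem_insert_of_mem _ rfl⟩)))
  · intro u v h; exact Or.inl h
  · intro h
    have := h wc wd (Or.inr ⟨Set.mem_insert _ _, Set.mem_insert_of_mem _ rfl⟩)
    rcases this with h'|⟨h1,h2⟩
    · exact n6 (congrArg Subtype.val h')
    · simp only [Set.mem_insert_iff, Set.mem_singleton_iff] at h1
      rcases h1 with h1|h1
      · exact n2 h1.symm
      · exact n4 h1.symm
  · intro u v h
    rcases h with (rfl|⟨h1,h2⟩)|⟨h1,h2⟩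
    · exact Or.inl rfl
    · exact Or.inr ⟨up1 _ h1, up1 _ h2⟩
    · exact Or.inr ⟨up2 _ h1, up2 _ h2⟩
  · intro h
    have := h wa wc (Or.inr ⟨mwa4, mwc4⟩)
    rcases this with (h'|⟨h1,h2⟩)|⟨h1,h2⟩
    · exact n2 (congrArg Subtype.val h')
    · simp only [Set.mem_insert_iff, Set.mem_singleton_iff] at h2
      rcases h2 with h2|h2
      · exact n2 h2.symm
      · exact n4 h2.symm
    · simp only [Set.mem_insert_iff, Set.mem_singleton_iff] at h1
      rcases h1 with h1|h1
      · exact n2 h1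
      · exact n3 h1
  · intro u v h; exact Or.inl h
  · intro h
    exact n3 (congrArg Subtype.val
      (h wa wd (Or.inr (Or.inl ⟨Set.mem_insert _ _, Set.mem_insert_of_mem _ rfl⟩))))
  · intro u v h
    rcases h with rfl|⟨h1,h2⟩|⟨h1,h2⟩
    · exact Or.inl rfl
    · exact Or.inr ⟨up3 _ h1, up3 _ h2⟩
    · exact Or.inr ⟨up4 _ h1, up4 _ h2⟩
  · intro h
    have := h wa wb (Or.inr ⟨mwa4, mwb4⟩)
    rcases this with h'|⟨h1,h2⟩|⟨h1,h2⟩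
    · exact n1 (congrArg Subtype.val h')
    · simp only [Set.mem_insert_iff, Set.mem_singleton_iff] at h2
      rcases h2 with h2|h2
      · exact n1 h2.symm
      · exact n5 h2
    · simp only [Set.mem_insert_iff, Set.mem_singleton_iff] at h1
      rcases h1 with h1|h1
      · exact n1 h1
      · exact n2 h1
  · intro u v
    constructor
    · rintro ⟨h1, h2⟩
      rcases h1 with (rfl|⟨ha1,ha2⟩)|⟨ha1,ha2⟩
      · rfl
      · rcases h2 with rfl|⟨hb1,hb2⟩|⟨hb1,hb2⟩
        · rfl
        · simp only [Set.mem_insert_iff, Set.mem_singleton_iff] at ha1 ha2 hb1 hb2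
          exact Subtype.ext ((pin1 _ ha1 hb1).trans (pin1 _ ha2 hb2).symm)
        · simp only [Set.mem_insert_iff, Set.mem_singleton_iff] at ha1 ha2 hb1 hb2
          exact Subtype.ext ((pin2 _ ha1 hb1).trans (pin2 _ ha2 hb2).symm)
      · rcases h2 with rfl|⟨hb1,hb2⟩|⟨hb1,hb2⟩
        · rfl
        · simp only [Set.mem_insert_iff, Set.mem_singleton_iff] at ha1 ha2 hb1 hb2
          exact Subtype.ext ((pin3 _ ha1 hb1).trans (pin3 _ ha2 hb2).symm)
        · simp only [Set.mem_insert_iff, Set.mem_singleton_iff] at ha1 ha2 hb1 hb2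
          exact Subtype.ext ((pin4 _ ha1 hb1).trans (pin4 _ ha2 hb2).symm)
    · rintro rfl
      exact ⟨Or.inl (Or.inl rfl), Or.inl rfl⟩
  · intro u v
    constructor
    · intro h
      refine h _ RCρ ?_ ?_
      · intro x y h'
        rcases h' with rfl|⟨h1,h2⟩
        · exact Or.inl rfl
        · exact Or.inr ⟨up1 _ h1, up1 _ h2⟩
      · intro x y h'
        rcases h' with rfl|⟨h1,h2⟩|⟨h1,h2⟩
        · exact Or.inl rfl
        · exact Or.inr ⟨up3 _ h1, up3 _ h2⟩
        · exact Or.inr ⟨up4 _ h1, up4 _ h2⟩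
    · rintro (rfl|⟨h1,h2⟩) μ hμ hσμ hτμ
      · obtain ⟨heq, -⟩ := hμ
        exact heq.refl u
      · obtain ⟨heq, -⟩ := hμ
        have mab : μ wa wb := hσμ _ _ (Or.inr ⟨Set.mem_insert _ _, Set.mem_insert_of_mem _ rfl⟩)
        have mad : μ wa wd := hτμ _ _
          (Or.inr (Or.inl ⟨Set.mem_insert _ _, Set.mem_insert_of_mem _ rfl⟩))
        have mbc : μ wb wc := hτμ _ _
          (Or.inr (Or.inr ⟨Set.mem_insert _ _, Set.mem_insert_of_mem _ rfl⟩))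
        have mac : μ wa wc := heq.trans mab mbc
        have key : ∀ w : Word A k,
            w.val ∈ ({List.replicate k a, b :: List.replicate (k-1) a, c :: List.replicate (k-1) a, d :: List.replicate (k-1) a} : Set (List A)) → μ wa w := by
          intro w hw
          simp only [Set.mem_insert_iff, Set.mem_singleton_iff] at hw
          rcases hw with h|h|h|h
          · rw [show w = wa from Subtype.ext h]; exact heq.refl wa
          · rw [show w = wb from Subtype.ext h]; exact mab
          · rw [show w = wc from Subtype.ext h]; exact mac
          · rw [show w = wd from Subtype.ext h]; exact mad
        exact heq.trans (heq.symm (key u h1)) (key v h2)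

/-- for `k ≥ 1` and `|A| ≥ 4`, `RC(A^k)` is not modular: for distinct
`a,b,c,d ∈ A` the relations `λ ⊂ σ ⊂ σ' ⊂ ρ`, `λ ⊂ τ ⊂ ρ` with `σ' ∩ τ = λ` and
`σ ∨ τ = ρ` are right congruences forming a pentagon sublattice. -/
theorem RC_not_modular {A : Type*} [Fintype A] (hA : 4 ≤ Fintype.card A)
    (k : ℕ) (hk : 1 ≤ k) :
    ∀ a b c d : A, a ≠ b → a ≠ c → a ≠ d → b ≠ c → b ≠ d → c ≠ d →
    let ak : List A := List.replicate k a
    let bak : List A := b :: List.replicate (k-1) a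
    let cak : List A := c :: List.replicate (k-1) a
    let dak : List A := d :: List.replicate (k-1) a
    let lam : Word A k → Word A k → Prop := fun u v => u = v
    let σ : Word A k → Word A k → Prop := fun u v =>
      u = v ∨ (u.val ∈ ({ak, bak} : Set (List A)) ∧ v.val ∈ ({ak, bak} : Set (List A)))
    let σ' : Word A k → Word A k → Prop := fun u v =>
      σ u v ∨ (u.val ∈ ({cak, dak} : Set (List A)) ∧ v.val ∈ ({cak, dak} : Set (List A)))
    let τ : Word A k → Word A k → Prop := fun u v =>
      u = v ∨ (u.val ∈ ({ak, dak} : Set (List A)) ∧ v.val ∈ ({ak, dak} : Set (List A)))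
        ∨ (u.val ∈ ({bak, cak} : Set (List A)) ∧ v.val ∈ ({bak, cak} : Set (List A)))
    let ρ : Word A k → Word A k → Prop := fun u v =>
      u = v ∨ (u.val ∈ ({ak, bak, cak, dak} : Set (List A)) ∧
        v.val ∈ ({ak, bak, cak, dak} : Set (List A)))
    IsRC k lam ∧ IsRC k σ ∧ IsRC k σ' ∧ IsRC k τ ∧ IsRC k ρ ∧
    (Rle lam σ ∧ ¬ Rle σ lam) ∧ (Rle σ σ' ∧ ¬ Rle σ' σ) ∧ (Rle σ' ρ ∧ ¬ Rle ρ σ') ∧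
    (Rle lam τ ∧ ¬ Rle τ lam) ∧ (Rle τ ρ ∧ ¬ Rle ρ τ) ∧
    (∀ u v : Word A k, (σ' u v ∧ τ u v) ↔ lam u v) ∧
    (∀ u v : Word A k, RCjoin k σ τ u v ↔ ρ u v) := by
  intro a b c d hab hac had hbc hbd hcd
  intro ak bak cak dak lam σ σ' τ ρ
  exact rc_aux k hk a b c d hab hac had hbc hbd hcd lam σ σ' τ ρ rfl rfl rfl rfl rfl
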